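/- The limit of the product satisfies P* = P0 + a·B0 + b·(X0 + s0 - s*), where a = (Y_{P/s} m_P + k_d Y_{B/s}(α - m_s/k_d)) / (k_d Y_{P/s} [1 - Y_{B/s}(α - m_s/k_d)]) and b = Y_{B/s}(Y_{P/s} m_P + k_d) / (k_d Y_{P/s} [1 - Y_{B/s}(α - m_s/k_d)]), and b > 0. -/

import Mathlib

open Set Filter

/-- If `f` has nonnegative derivative on `[a,b]`, then `f a ≤ f b`. -/
lemma mono_Icc_aux (f f' : ℝ → ℝ) (a b : ℝ) (hab : a ≤ b)
    (hd : ∀ x ∈ Set.Icc a b, HasDerivAt f (f' x) x)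
    (h0 : ∀ x ∈ Set.Icc a b, 0 ≤ f' x) : f a ≤ f b := by
  have hc : ContinuousOn f (Set.Icc a b) :=
    fun x hx => ((hd x hx).continuousAt).continuousWithinAt
  have hmono := monotoneOn_of_deriv_nonneg (convex_Icc a b) hc
    (fun x hx => ((hd x (interior_subset hx)).differentiableAt).differentiableWithinAt)
    (fun x hx => by rw [(hd x (interior_subset hx)).deriv]; exact h0 x (interior_subset hx))
  exact hmono (Set.left_mem_Icc.2 hab) (Set.right_mem_Icc.2 hab) hab

/-- If `f` has nonpositive derivative on `[a,b]`, then `f b ≤ f x` for every `x ∈ [a,b]`. -/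
lemma anti_Icc_aux (f f' : ℝ → ℝ) (a b : ℝ)
    (hd : ∀ x ∈ Set.Icc a b, HasDerivAt f (f' x) x)
    (h0 : ∀ x ∈ Set.Icc a b, f' x ≤ 0) : ∀ x ∈ Set.Icc a b, f b ≤ f x := by
  intro x hx
  have hsub : Set.Icc x b ⊆ Set.Icc a b := Set.Icc_subset_Icc hx.1 le_rfl
  have := mono_Icc_aux (fun s => -f s) (fun s => -f' s) x b hx.2
    (fun y hy => (hd y (hsub hy)).neg)
    (fun y hy => neg_nonneg.2 (h0 y (hsub hy)))
  have h2 : -f x ≤ -f b := this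
  linarith

/-- If `f` has zero derivative on `[0,∞)`, then `f t = f 0` for `t ≥ 0`. -/
lemma const_Ici_aux (f : ℝ → ℝ) (hd : ∀ x, 0 ≤ x → HasDerivAt f 0 x) :
    ∀ t, 0 ≤ t → f t = f 0 := by
  intro t ht
  have h1 : f 0 ≤ f t := mono_Icc_aux f (fun _ => 0) 0 t ht
    (fun x hx => hd x hx.1) (fun x _ => le_rfl)
  have h2 : f t ≤ f 0 := by
    have := mono_Icc_aux (fun s => -f s) (fun _ => 0) 0 t ht
      (fun x hx => (hd x hx.1).neg.congr_deriv neg_zero) (fun x _ => le_rfl)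
    have h2 : -f 0 ≤ -f t := this
    linarith
  linarith

set_option maxHeartbeats 1000000 in
theorem stmt_13 (μ : ℝ → ℝ) (KH α kd YB YP ms mP sstar Pstar : ℝ)
    (X B S P : ℝ → ℝ)
    (hμ : ContDiff ℝ 1 μ) (hμ0 : μ 0 = 0) (hμpos : ∀ x, 0 < x → 0 < μ x)
    (hkd : 0 < kd) (hkdmax : ∃ x, kd < μ x)
    (hKH : 0 < KH) (hα0 : 0 < α) (hα1 : α < 1)
    (hYB : 0 < YB) (hYB1 : YB < 1) (hYP : 0 < YP) (hYP1 : YP < 1)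
    (hms : 0 < ms) (hmP : 0 < mP)
    (hpos : ∀ t, 0 ≤ t → 0 ≤ X t ∧ 0 ≤ B t ∧ 0 ≤ S t ∧ 0 ≤ P t)
    (hODE : ∀ t, 0 ≤ t →
      HasDerivAt X (-KH * X t + α * kd * B t) t ∧
      HasDerivAt B ((μ (S t) - kd) * B t) t ∧
      HasDerivAt S (-(μ (S t) / YB + ms) * B t + KH * X t) t ∧
      HasDerivAt P ((μ (S t) / YP + mP) * B t) t)
    (hS : Filter.Tendsto S Filter.atTop (nhds sstar))
    (hP : Filter.Tendsto P Filter.atTop (nhds Pstar)) :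
    Pstar = P 0
        + (YP * mP + kd * YB * (α - ms / kd)) /
            (kd * YP * (1 - YB * (α - ms / kd))) * B 0
        + YB * (YP * mP + kd) / (kd * YP * (1 - YB * (α - ms / kd)))
            * (X 0 + S 0 - sstar) ∧
      0 < YB * (YP * mP + kd) / (kd * YP * (1 - YB * (α - ms / kd))) := by
  have hkd' : kd ≠ 0 := ne_of_gt hkd
  have hYP' : YP ≠ 0 := ne_of_gt hYP
  have hYB' : YB ≠ 0 := ne_of_gt hYB
  have hDpos : 0 < 1 - YB * (α - ms / kd) := by
    have h1 : 0 < ms / kd := div_pos hms hkd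
    nlinarith [mul_pos hYB h1]
  have hD' : (1 : ℝ) - YB * (α - ms / kd) ≠ 0 := ne_of_gt hDpos
  set a : ℝ := (YP * mP + kd * YB * (α - ms / kd)) /
      (kd * YP * (1 - YB * (α - ms / kd))) with ha
  set b : ℝ := YB * (YP * mP + kd) / (kd * YP * (1 - YB * (α - ms / kd))) with hb
  have hbpos : 0 < b := by
    rw [hb]
    exact div_pos (by positivity) (by positivity)
  have hb' : b ≠ 0 := ne_of_gt hbpos
  -- nonnegativity of μ on [0,∞)
  have hμnn : ∀ x : ℝ, 0 ≤ x → 0 ≤ μ x := by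
    intro x hx
    rcases hx.eq_or_lt with h | h
    · simp [← h, hμ0]
    · exact (hμpos x h).le
  -- the conserved quantity
  set F : ℝ → ℝ := fun t => P t + b * X t + a * B t + b * S t with hF
  have hYBα : (0:ℝ) < 1 - YB * α := by nlinarith
  have hEpos : 0 < kd + YB * ms - YB * α * kd := by
    nlinarith [mul_pos hYB hms, mul_pos hkd hYBα]
  have hE' : kd + YB * ms - YB * α * kd ≠ 0 := ne_of_gt hEpos
  have hYPE : YP * (kd + YB * ms - YB * α * kd) ≠ 0 := mul_ne_zero hYP' hE'
  have hEeq : kd * YP * (1 - YB * (α - ms / kd)) = YP * (kd + YB * ms - YB * α * kd) := by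
    field_simp; ring
  have ha2 : a * (YP * (kd + YB * ms - YB * α * kd)) = YP * mP + YB * (α * kd - ms) := by
    rw [ha, hEeq, div_mul_cancel₀ _ hYPE]; field_simp
  have hb2 : b * (YP * (kd + YB * ms - YB * α * kd)) = YB * (YP * mP + kd) := by
    rw [hb, hEeq, div_mul_cancel₀ _ hYPE]
  have h1p : YB + a * (YP * YB) - b * YP = 0 := by
    have h1'' : (kd + YB * ms - YB * α * kd) * (YB + a * (YP * YB) - b * YP) = 0 := by
      linear_combination YB * ha2 - hb2
    exact (mul_eq_zero.mp h1'').resolve_left hE'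
  have h2p : mP + b * (α * kd) - a * kd - b * ms = 0 := by
    have h2'' : ((kd + YB * ms - YB * α * kd) * YP) *
        (mP + b * (α * kd) - a * kd - b * ms) = 0 := by
      linear_combination (α * kd - ms) * hb2 - kd * ha2
    exact (mul_eq_zero.mp h2'').resolve_left (mul_ne_zero hE' hYP')
  have hF' : ∀ t, 0 ≤ t → HasDerivAt F 0 t := by
    intro t ht
    obtain ⟨hX', hB', hS', hP'⟩ := hODE t ht
    have h := ((hP'.add (hX'.const_mul b)).add (hB'.const_mul a)).add (hS'.const_mul b)
    convert h using 1
    · rfl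
    · rfl
    · rfl
    field_simp
    linear_combination (-(B t * μ (S t))) * h1p + (-(B t * YP * YB)) * h2p
  have hFconst : ∀ t, 0 ≤ t → F t = F 0 := const_Ici_aux F hF'
  -- a uniform bound on μ ∘ S
  obtain ⟨T0, hT0⟩ : ∃ T0, ∀ t ≥ T0, S t ∈ Icc (sstar - 1) (sstar + 1) := by
    obtain ⟨T0, hT0⟩ := Metric.tendsto_atTop.mp hS 1 one_pos
    refine ⟨T0, fun t ht => ?_⟩
    have := hT0 t ht
    rw [Real.dist_eq] at this
    have h2 := abs_lt.mp this
    exact ⟨by linarith [h2.1], by linarith [h2.2]⟩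
  set T : ℝ := max T0 0 with hT
  have hScont : ContinuousOn S (Icc 0 T) := fun x hx =>
    ((hODE x hx.1).2.2.1.continuousAt).continuousWithinAt
  set K : Set ℝ := S '' Icc 0 T ∪ Icc (sstar - 1) (sstar + 1) with hK
  have hKcomp : IsCompact K :=
    (isCompact_Icc.image_of_continuousOn hScont).union isCompact_Icc
  have hKne : K.Nonempty := ⟨sstar - 1, Or.inr ⟨le_rfl, by linarith⟩⟩
  obtain ⟨x0, _, hx0⟩ := hKcomp.exists_isMaxOn hKne (hμ.continuous.continuousOn)
  set M : ℝ := |μ x0| with hM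
  have hM0 : 0 ≤ M := abs_nonneg _
  have hMb : ∀ s, 0 ≤ s → μ (S s) ≤ M := by
    intro s hs
    have : S s ∈ K := by
      rcases le_total s T with h | h
      · exact Or.inl ⟨s, ⟨hs, h⟩, rfl⟩
      · exact Or.inr (hT0 s (le_trans (le_max_left _ _) h))
    exact (hx0 this).trans (le_abs_self _)
  -- key estimate: B (t+1) ≤ exp M / mP * (P (t+1) - P t)
  have hkey : ∀ t, 0 ≤ t → B (t + 1) ≤ Real.exp M / mP * (P (t + 1) - P t) := by
    intro t ht
    have hmem : ∀ s ∈ Icc t (t + 1), 0 ≤ s := fun s hs => le_trans ht hs.1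
    -- B s ≥ B (t+1) * exp (-M) on [t, t+1]
    have hg : ∀ s ∈ Icc t (t + 1), B (t + 1) ≤ B s * Real.exp M := by
      have hganti := anti_Icc_aux (fun s => B s * Real.exp (M * (t + 1 - s)))
        (fun s => (μ (S s) - kd) * B s * Real.exp (M * (t + 1 - s)) +
          B s * (Real.exp (M * (t + 1 - s)) * (M * (-1)))) t (t + 1)
        (fun s hs => by
          have he : HasDerivAt (fun s : ℝ => Real.exp (M * (t + 1 - s)))
              (Real.exp (M * (t + 1 - s)) * (M * (-1))) s := by
            have h1 : HasDerivAt (fun s : ℝ => t + 1 - s) (-1) s := by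
              simpa using (hasDerivAt_id s).const_sub (t + 1)
            exact ((h1.const_mul M).exp)
          exact ((hODE s (hmem s hs)).2.1).mul he)
        (fun s hs => by
          have hBnn := (hpos s (hmem s hs)).2.1
          have hμb := hMb s (hmem s hs)
          have hexp := Real.exp_pos (M * (t + 1 - s))
          beta_reduce
          nlinarith [mul_nonneg (mul_nonneg hBnn hexp.le) (sub_nonneg.2 hμb),
            mul_nonneg (mul_nonneg hkd.le hBnn) hexp.le])
      intro s hs
      have h1 := hganti s hs
      simp only [sub_self, mul_zero, Real.exp_zero, mul_one] at h1
      calc B (t + 1) ≤ B s * Real.exp (M * (t + 1 - s)) := h1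
        _ ≤ B s * Real.exp M := by
            apply mul_le_mul_of_nonneg_left _ (hpos s (hmem s hs)).2.1
            apply Real.exp_le_exp.2
            nlinarith [mul_nonneg hM0 (sub_nonneg.2 hs.1), hs.2]
    -- P grows at least linearly at rate mP * B(t+1) / exp M
    have hφ := mono_Icc_aux (fun s => P s - mP * (B (t + 1) / Real.exp M) * s)
      (fun s => (μ (S s) / YP + mP) * B s - mP * (B (t + 1) / Real.exp M)) t (t + 1)
      (by linarith)
      (fun s hs => by
        have h1 := (hODE s (hmem s hs)).2.2.2
        exact (h1.sub ((hasDerivAt_id s).const_mul (mP * (B (t + 1) / Real.exp M)))).congr_deriv (by ring))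
      (fun s hs => by
        have hBnn := (hpos s (hmem s hs)).2.1
        have hμnn' : 0 ≤ μ (S s) := hμnn _ (hpos s (hmem s hs)).2.2.1
        have hgs := hg s hs
        have hexp := Real.exp_pos M
        have h2 : B (t + 1) / Real.exp M ≤ B s := by
          rw [div_le_iff₀ hexp]; linarith
        have h3 : 0 ≤ μ (S s) / YP * B s := by positivity
        nlinarith)
    have hexp := Real.exp_pos M
    rw [div_mul_eq_mul_div, le_div_iff₀ hmP]
    have h5 : mP * (B (t + 1) / Real.exp M) ≤ P (t + 1) - P t := by linarith
    rw [mul_div_assoc'] at h5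
    have h6 := (div_le_iff₀ hexp).mp h5
    nlinarith [h6]
  -- B tends to 0
  have hBlim : Tendsto B atTop (nhds 0) := by
    have hPshift : Tendsto (fun t : ℝ => P (t - 1)) atTop (nhds Pstar) :=
      hP.comp (tendsto_atTop_add_const_right atTop (-1) tendsto_id)
    have hg0 : Tendsto (fun t : ℝ => Real.exp M / mP * (P t - P (t - 1))) atTop (nhds 0) := by
      have := (hP.sub hPshift).const_mul (Real.exp M / mP)
      simpa using this
    apply squeeze_zero' (g := fun t : ℝ => Real.exp M / mP * (P t - P (t - 1)))
    · filter_upwards [eventually_ge_atTop (0:ℝ)] with t ht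
      exact (hpos t ht).2.1
    · filter_upwards [eventually_ge_atTop (1:ℝ)] with t ht
      have := hkey (t - 1) (by linarith)
      simpa using this
    · exact hg0
  -- X tends to L
  set L : ℝ := (F 0 - Pstar - a * 0 - b * sstar) / b with hL
  have hXlim : Tendsto X atTop (nhds L) := by
    have h1 : Tendsto (fun t => (F 0 - P t - a * B t - b * S t) / b) atTop (nhds L) := by
      rw [hL]
      exact (((tendsto_const_nhds.sub hP).sub (hBlim.const_mul a)).sub
        (hS.const_mul b)).div_const b
    apply h1.congr'
    filter_upwards [eventually_ge_atTop (0:ℝ)] with t ht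
    have h2 : P t + b * X t + a * B t + b * S t = F 0 := hFconst t ht
    field_simp
    linarith
  -- the derivative of X tends to -KH * L, which must be 0
  have hDlim : Tendsto (fun t => -KH * X t + α * kd * B t) atTop
      (nhds (-KH * L + α * kd * 0)) :=
    (hXlim.const_mul (-KH)).add (hBlim.const_mul (α * kd))
  have hmvt : ∀ t : ℝ, 0 ≤ t → ∃ c ∈ Ioo t (t + 1),
      -KH * X c + α * kd * B c = (X (t + 1) - X t) / (t + 1 - t) := by
    intro t ht
    apply exists_hasDerivAt_eq_slope X (fun s => -KH * X s + α * kd * B s)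
      (by linarith)
    · exact fun x hx => ((hODE x (le_trans ht hx.1)).1.continuousAt).continuousWithinAt
    · exact fun x hx => (hODE x (le_trans ht hx.1.le)).1
  set c : ℝ → ℝ := fun t => if h : 0 ≤ t then (hmvt t h).choose else 0 with hc
  have hc1 : ∀ t : ℝ, 0 ≤ t → c t ∈ Ioo t (t + 1) ∧
      -KH * X (c t) + α * kd * B (c t) = (X (t + 1) - X t) / (t + 1 - t) := by
    intro t ht
    rw [hc]
    simp only [dif_pos ht]
    exact ⟨(hmvt t ht).choose_spec.1, (hmvt t ht).choose_spec.2⟩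
  have hctop : Tendsto c atTop atTop := by
    apply tendsto_atTop_mono' atTop (f₁ := id)
    · filter_upwards [eventually_ge_atTop (0:ℝ)] with t ht
      exact (hc1 t ht).1.1.le
    · exact tendsto_id
  have hcomp : Tendsto (fun t => -KH * X (c t) + α * kd * B (c t)) atTop
      (nhds (-KH * L + α * kd * 0)) := hDlim.comp hctop
  have hslope : Tendsto (fun t => -KH * X (c t) + α * kd * B (c t)) atTop (nhds 0) := by
    have hXshift : Tendsto (fun t : ℝ => X (t + 1)) atTop (nhds L) :=
      hXlim.comp (tendsto_atTop_add_const_right atTop 1 tendsto_id)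
    have h2 : Tendsto (fun t : ℝ => X (t + 1) - X t) atTop (nhds 0) := by
      have := hXshift.sub hXlim
      simpa using this
    apply h2.congr'
    filter_upwards [eventually_ge_atTop (0:ℝ)] with t ht
    rw [(hc1 t ht).2]
    simp
  have hL0 : L = 0 := by
    have h := tendsto_nhds_unique hcomp hslope
    simp only [mul_zero, add_zero] at h
    rcases mul_eq_zero.mp h with h' | h'
    · exact absurd (neg_eq_zero.mp h') (ne_of_gt hKH)
    · exact h'
  have h9 : F 0 - Pstar - a * 0 - b * sstar = 0 := by
    rcases div_eq_zero_iff.mp (hL ▸ hL0) with h | h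
    · exact h
    · exact absurd h hb'
  have h10 : F 0 = P 0 + b * X 0 + a * B 0 + b * S 0 := rfl
  constructor
  · linear_combination h10 - h9
  · exact hbpos
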